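/- Let (H, Δ, ε) be a bialgebra over a commutative ring k with a triangular universal R-matrix R, let F be a Drinfel'd twist on H, and let A be a left H-module algebra that is braided commutative with respect to R: writing R⁻¹ = Σᵢ uᵢ⊗vᵢ, b·a = Σᵢ (uᵢ▷a)·(vᵢ▷b) for all a, b ∈ A. Then the twisted algebra (A, ⋆_F), where a ⋆_F b := Σⱼ (pⱼ▷a)·(qⱼ▷b) for F⁻¹ = Σⱼ pⱼ⊗qⱼ, is braided commutative with respect to the twisted R-matrix R_F := F₂₁·R·F⁻¹: writing R_F⁻¹ = Σₗ sₗ⊗tₗ, one has b ⋆_F a = Σₗ (sₗ▷a) ⋆_F (tₗ▷b) for all a, b ∈ A. -/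

import Mathlib

/-!
STATEMENT 16: If `(H, Δ, ε)` carries a triangular universal R-matrix `R`, `F` is a
Drinfel'd twist on `H`, and `A` is a braided commutative left `H`-module algebra,
then the twisted algebra `(A, ⋆_F)` is braided commutative with respect to the
twisted R-matrix `R_F = F₂₁·R·F⁻¹`.
-/

open TensorProduct

noncomputable section

namespace Stmt

variable (k : Type*) [CommRing k] (H : Type*) [Ring H] [Bialgebra k H]
variable (A : Type*) [Ring A] [Algebra k A]
variable [Module H A] [IsScalarTower k H A] [SMulCommClass k H A]

/-- The action of `H` on `A` as a `k`-bilinear map. -/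
def actE : H →ₗ[k] A →ₗ[k] A :=
  LinearMap.mk₂ k (fun ξ a => ξ • a)
    (fun ξ η a => add_smul ξ η a)
    (fun c ξ a => smul_assoc c ξ a)
    (fun ξ a b => smul_add ξ a b)
    (fun c ξ a => (smul_comm c ξ a).symm)

/-- The componentwise action of `T ∈ H ⊗ H` on `A ⊗ A`. -/
def act2 (T : H ⊗[k] H) : A ⊗[k] A →ₗ[k] A ⊗[k] A :=
  TensorProduct.homTensorHomMap (RingHom.id k) A A A A
    ((TensorProduct.map (actE k H A) (actE k H A)) T)

/-- For a `k`-bilinear map `Bm` on `A` and `T = Σ u ⊗ v ∈ H ⊗ H`, the bilinear map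
`(a, b) ↦ Σ Bm (u • a) (v • b)` (a "Sweedler sum"). -/
def hodgeL (Bm : A →ₗ[k] A →ₗ[k] A) (T : H ⊗[k] H) : A →ₗ[k] A →ₗ[k] A :=
  (TensorProduct.mk k A A).compr₂ ((TensorProduct.lift Bm).comp (act2 k H A T))

section BialgebraMaps

/-- Comultiplication as an algebra homomorphism. -/
def Δ : H →ₐ[k] H ⊗[k] H := Bialgebra.comulAlgHom k H

/-- Counit as an algebra homomorphism. -/
def ε : H →ₐ[k] k := Bialgebra.counitAlgHom k H

/-- Flip of the two tensor factors of `H ⊗ H`. -/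
def τ : H ⊗[k] H ≃ₐ[k] H ⊗[k] H := Algebra.TensorProduct.comm k H H

/-- Leg embedding `x ↦ x₁₂` of `H ⊗ H` into `H ⊗ H ⊗ H`. -/
def ι₁₂ : H ⊗[k] H →ₐ[k] H ⊗[k] (H ⊗[k] H) :=
  Algebra.TensorProduct.map (AlgHom.id k H) Algebra.TensorProduct.includeLeft

/-- Leg embedding `x ↦ x₁₃` of `H ⊗ H` into `H ⊗ H ⊗ H`. -/
def ι₁₃ : H ⊗[k] H →ₐ[k] H ⊗[k] (H ⊗[k] H) :=
  Algebra.TensorProduct.map (AlgHom.id k H) Algebra.TensorProduct.includeRight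

/-- Leg embedding `x ↦ x₂₃` of `H ⊗ H` into `H ⊗ H ⊗ H`. -/
def ι₂₃ : H ⊗[k] H →ₐ[k] H ⊗[k] (H ⊗[k] H) :=
  Algebra.TensorProduct.includeRight

/-- `Δ ⊗ id : H ⊗ H → H ⊗ H ⊗ H` (re-associated). -/
def Δ₁ : H ⊗[k] H →ₐ[k] H ⊗[k] (H ⊗[k] H) :=
  (Algebra.TensorProduct.assoc k k k H H H).toAlgHom.comp
    (Algebra.TensorProduct.map (Δ k H) (AlgHom.id k H))

/-- `id ⊗ Δ : H ⊗ H → H ⊗ H ⊗ H`. -/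
def Δ₂ : H ⊗[k] H →ₐ[k] H ⊗[k] (H ⊗[k] H) :=
  Algebra.TensorProduct.map (AlgHom.id k H) (Δ k H)

/-- `ε ⊗ id : H ⊗ H → H`. -/
def ε₁ : H ⊗[k] H →ₐ[k] H :=
  (Algebra.TensorProduct.lid k H).toAlgHom.comp
    (Algebra.TensorProduct.map (ε k H) (AlgHom.id k H))

/-- `id ⊗ ε : H ⊗ H → H`. -/
def ε₂ : H ⊗[k] H →ₐ[k] H :=
  (Algebra.TensorProduct.rid k k H).toAlgHom.comp
    (Algebra.TensorProduct.map (AlgHom.id k H) (ε k H))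

end BialgebraMaps

lemma act2_tmul_tmul (ξ η : H) (a b : A) :
    act2 k H A (ξ ⊗ₜ η) (a ⊗ₜ b) = (ξ • a) ⊗ₜ (η • b) := by
  simp [act2, actE]

lemma act2_zero : act2 k H A (0 : H ⊗[k] H) = 0 := by
  simp [act2]

lemma act2_add (S T : H ⊗[k] H) :
    act2 k H A (S + T) = act2 k H A S + act2 k H A T := by
  simp [act2, map_add]

lemma act2_mul_apply (S T : H ⊗[k] H) (x : A ⊗[k] A) :
    act2 k H A (S * T) x = act2 k H A S (act2 k H A T x) := by
  induction S using TensorProduct.induction_on with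
  | zero => simp [act2_zero]
  | tmul ξ η =>
      induction T using TensorProduct.induction_on with
      | zero => simp [act2_zero]
      | tmul ξ' η' =>
          induction x using TensorProduct.induction_on with
          | zero => simp
          | tmul a b =>
              simp [Algebra.TensorProduct.tmul_mul_tmul, act2_tmul_tmul, mul_smul]
          | add x y hx hy => simp only [map_add, hx, hy]
      | add T₁ T₂ h₁ h₂ =>
          simp only [mul_add, act2_add, LinearMap.add_apply, map_add, h₁, h₂]
  | add S₁ S₂ h₁ h₂ =>
      simp only [add_mul, act2_add, LinearMap.add_apply, h₁, h₂]

lemma hodgeL_apply (Bm : A →ₗ[k] A →ₗ[k] A) (T : H ⊗[k] H) (a b : A) :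
    hodgeL k H A Bm T a b = TensorProduct.lift Bm (act2 k H A T (a ⊗ₜ b)) := rfl

lemma lift_hodgeL (Bm : A →ₗ[k] A →ₗ[k] A) (T : H ⊗[k] H) (x : A ⊗[k] A) :
    TensorProduct.lift (hodgeL k H A Bm T) x
      = TensorProduct.lift Bm (act2 k H A T x) := by
  induction x using TensorProduct.induction_on with
  | zero => simp
  | tmul a b => rfl
  | add x y hx hy => simp only [map_add, hx, hy]

/-- **Twisting preserves braided commutativity.**  Let `Rm` be a triangular universal
R-matrix on `H` (with two-sided inverse `Rm'`), `A` a braided commutative left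
`H`-module algebra, and `F` a Drinfel'd twist on `H` with two-sided inverse `Finv`.
Then the twisted algebra `(A, ⋆_F)` (with `a ⋆_F b = hodgeL mul Finv a b`) is braided
commutative with respect to `R_F = F₂₁·Rm·F⁻¹`: writing `R_F⁻¹ = Σ s ⊗ t`, one has
`b ⋆_F a = Σ (s▷a) ⋆_F (t▷b)` for all `a b ∈ A`. -/
theorem twisted_braided_commutativity
    -- `A` is a left `H`-module algebra:
    (hMA : ∀ (ξ : H) (a b : A),
      ξ • (a * b) = hodgeL k H A (LinearMap.mul k A) (Coalgebra.comul (R := k) ξ) a b)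
    (hone : ∀ ξ : H, ξ • (1 : A) = Coalgebra.counit (R := k) ξ • (1 : A))
    -- `Rm` is a triangular universal R-matrix:
    (Rm Rm' : H ⊗[k] H)
    (hR : Rm * Rm' = 1) (hR' : Rm' * Rm = 1)
    (hqc : ∀ ξ : H, τ k H (Δ k H ξ) = Rm * Δ k H ξ * Rm')
    (hhex₁ : Δ₁ k H Rm = ι₁₃ k H Rm * ι₂₃ k H Rm)
    (hhex₂ : Δ₂ k H Rm = ι₁₃ k H Rm * ι₁₂ k H Rm)
    (htri : τ k H Rm = Rm')
    -- `A` is braided commutative with respect to `Rm`: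
    (hbc : ∀ a b : A, b * a = hodgeL k H A (LinearMap.mul k A) Rm' a b)
    -- `F` is a Drinfel'd twist on `H`:
    (F Finv : H ⊗[k] H)
    (hF : F * Finv = 1) (hF' : Finv * F = 1)
    (hnorm₁ : ε₁ k H F = 1) (hnorm₂ : ε₂ k H F = 1)
    (hcoc : ι₁₂ k H F * Δ₁ k H F = ι₂₃ k H F * Δ₂ k H F) :
    -- `(A, ⋆_F)` is braided commutative with respect to `R_F = F₂₁·Rm·F⁻¹`:
    ∀ RFinv : H ⊗[k] H,
      (τ k H F * Rm * Finv) * RFinv = 1 → RFinv * (τ k H F * Rm * Finv) = 1 →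
      ∀ a b : A,
        hodgeL k H A (LinearMap.mul k A) Finv b a =
          hodgeL k H A (hodgeL k H A (LinearMap.mul k A) Finv) RFinv a b := by
  intro RFinv hRF hRF' a b
  -- inverses of the flip of `F`
  have hτ : τ k H F * τ k H Finv = 1 := by rw [← map_mul, hF, map_one]
  -- `(F₂₁·Rm·F⁻¹)·(F·Rm'·(F⁻¹)₂₁) = 1`
  have h1 : Finv * (F * (Rm' * τ k H Finv)) = Rm' * τ k H Finv := by
    rw [← mul_assoc, hF', one_mul]
  have h2 : Rm * (Rm' * τ k H Finv) = τ k H Finv := by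
    rw [← mul_assoc, hR, one_mul]
  have hXY : (τ k H F * Rm * Finv) * (F * Rm' * τ k H Finv) = 1 := by
    simp only [mul_assoc, h1, h2, hτ]
  -- uniqueness of inverses
  have hRFinv : RFinv = F * Rm' * τ k H Finv := left_inv_eq_right_inv hRF' hXY
  have hkey : Finv * RFinv = Rm' * τ k H Finv := by
    rw [hRFinv]
    simp only [← mul_assoc]
    rw [hF', one_mul]
  -- braided commutativity moves the flip through `act2`
  have hflip : ∀ T : H ⊗[k] H,
      TensorProduct.lift (LinearMap.mul k A) (act2 k H A T (b ⊗ₜ a))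
        = TensorProduct.lift (LinearMap.mul k A)
            (act2 k H A Rm' (act2 k H A (τ k H T) (a ⊗ₜ b))) := by
    intro T
    induction T using TensorProduct.induction_on with
    | zero => simp [act2_zero]
    | tmul ξ η =>
        have := hbc (η • a) (ξ • b)
        simpa [τ, Algebra.TensorProduct.comm_tmul, act2_tmul_tmul,
          hodgeL_apply] using this
    | add T₁ T₂ h₁ h₂ =>
        simp only [act2_add, LinearMap.add_apply, map_add, h₁, h₂]
  calc hodgeL k H A (LinearMap.mul k A) Finv b a
      = TensorProduct.lift (LinearMap.mul k A) (act2 k H A Finv (b ⊗ₜ a)) := rfl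
    _ = TensorProduct.lift (LinearMap.mul k A)
          (act2 k H A Rm' (act2 k H A (τ k H Finv) (a ⊗ₜ b))) := hflip Finv
    _ = TensorProduct.lift (LinearMap.mul k A)
          (act2 k H A (Rm' * τ k H Finv) (a ⊗ₜ b)) := by rw [act2_mul_apply]
    _ = TensorProduct.lift (LinearMap.mul k A)
          (act2 k H A (Finv * RFinv) (a ⊗ₜ b)) := by rw [hkey]
    _ = TensorProduct.lift (LinearMap.mul k A)
          (act2 k H A Finv (act2 k H A RFinv (a ⊗ₜ b))) := by rw [act2_mul_apply]
    _ = TensorProduct.lift (hodgeL k H A (LinearMap.mul k A) Finv)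
          (act2 k H A RFinv (a ⊗ₜ b)) := (lift_hodgeL k H A _ _ _).symm
    _ = hodgeL k H A (hodgeL k H A (LinearMap.mul k A) Finv) RFinv a b := rfl

end Stmt
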